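/- Let A be an orthomodular lattice, F(A) its filter space with orthogonality x ⊥_A y iff ∃a (a ∈ x ∧ -a ∈ y), and for U ⊆ F(A) let U^⊥ = {x : ∀y ∈ U, x ⊥_A y}. Then for every a ∈ A, h(-a) = h(a)^⊥, where h(a) = {x ∈ F(A) : a ∈ x}. -/
import Mathlib


def IsFilter {α : Type*} [Lattice α] (F : Set α) : Prop :=
  F.Nonempty ∧ (∀ a b : α, a ∈ F → a ≤ b → b ∈ F) ∧
    (∀ a b : α, a ∈ F → b ∈ F → a ⊓ b ∈ F)

/-- For every `a` in an orthomodular lattice, `h(-a) = h(a)^⊥`, where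
    `h(a) = {x ∈ F(A) : a ∈ x}`, `x ⊥_A y ↔ ∃ b, b ∈ x ∧ -b ∈ y`, and
    `U^⊥ = {x ∈ F(A) : ∀ y ∈ U, x ⊥_A y}`. -/
theorem canonical_map_compl {α : Type*} [Lattice α] [BoundedOrder α]
    (oc : α → α)
    (h_inf : ∀ a : α, a ⊓ oc a = ⊥)
    (h_sup : ∀ a : α, a ⊔ oc a = ⊤)
    (h_anti : ∀ a b : α, a ≤ b → oc b ≤ oc a)
    (h_inv : ∀ a : α, oc (oc a) = a)
    (h_om : ∀ a b : α, a ≤ b → b = a ⊔ (oc a ⊓ b)) :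
    ∀ a : α, {x : Set α | IsFilter x ∧ oc a ∈ x} =
      {x : Set α | IsFilter x ∧
        ∀ y ∈ {y : Set α | IsFilter y ∧ a ∈ y}, ∃ b : α, b ∈ x ∧ oc b ∈ y} := by
  intro a
  ext x
  simp only [Set.mem_setOf_eq]
  constructor
  · rintro ⟨hx, hoca⟩
    refine ⟨hx, fun y ⟨hy, hay⟩ => ⟨oc a, hoca, ?_⟩⟩
    rw [h_inv]; exact hay
  · rintro ⟨hx, hall⟩
    refine ⟨hx, ?_⟩
    have hyF : IsFilter {c : α | a ≤ c} :=
      ⟨⟨a, le_refl a⟩, fun c d hc hcd => le_trans hc hcd,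
        fun c d hc hd => le_inf hc hd⟩
    obtain ⟨b, hbx, hob⟩ := hall _ ⟨hyF, le_refl a⟩
    have : b ≤ oc a := by
      have := h_anti a (oc b) hob
      rwa [h_inv] at this
    exact hx.2.1 b (oc a) hbx this
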